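/- Work in the coordinate model with smooth Hamiltonian H(x^i,u^α,p^i_α), closed 1-form θ = θ_i(x)dx^i on ℝ^m, Θ_h = −H d_mx + p^i_α du^α∧(∂_i⌟d_mx), and (Ω_θ)_h = Ω_h + θ∧Θ_h. Let η^i_α(x,u) be smooth functions and σ: ℝ^m → ℝ^N smooth with ∂σ^α/∂x^i(x) = (∂H/∂p^i_α)(x, σ(x), η(x,σ(x))) for all x, i, α, and set ψ(x) = (x, σ(x), η^i_α(x,σ(x))). Then for every smooth ν-vertical vector field Z = Z^i_α ∂/∂p^i_α on J¹π*, one has ψ*(ι_Z (Ω_θ)_h) = 0. -/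

import Mathlib

open scoped BigOperators

noncomputable section

/-- A raw `k`-cochain on `E`: a scalar function of a point and `k` tangent vectors.
Smooth differential `k`-forms are regarded as such cochains by evaluation. -/
abbrev Coch (E : Type) (k : ℕ) : Type := E → (Fin k → E) → ℝ

/-- The (componentwise) exterior derivative of a `k`-cochain:
`(dω)(x)(v₀,…,v_k) = ∑ⱼ (-1)ʲ ∂_{vⱼ}(y ↦ ω(y)(v₀,…,v̂ⱼ,…,v_k))(x)`. -/
noncomputable def extDer {E : Type} [NormedAddCommGroup E] [NormedSpace ℝ E] {k : ℕ}
    (ω : Coch E k) : Coch E (k + 1) := fun x v =>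
  ∑ j : Fin (k + 1),
    (-1 : ℝ) ^ (j : ℕ) * fderiv ℝ (fun y => ω y (v ∘ j.succAbove)) x (v j)

/-- Wedge product of a 1-cochain with a `k`-cochain:
`(θ∧ω)(x)(v₀,…,v_k) = ∑ⱼ (-1)ʲ θ(x)(vⱼ) ω(x)(v₀,…,v̂ⱼ,…,v_k)`. -/
def wedge1 {E : Type} {k : ℕ} (θ : Coch E 1) (ω : Coch E k) : Coch E (k + 1) := fun x v =>
  ∑ j : Fin (k + 1), (-1 : ℝ) ^ (j : ℕ) * θ x (fun _ => v j) * ω x (v ∘ j.succAbove)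

/-- Interior product (contraction) of a cochain with a vector field. -/
def iotaV {E : Type} {k : ℕ} (X : E → E) (ω : Coch E (k + 1)) : Coch E k := fun x v =>
  ω x (Fin.cons (X x) v)

/-- Pullback of a cochain along a (smooth) map. -/
noncomputable def pullC {E F : Type} [NormedAddCommGroup E] [NormedSpace ℝ E]
    [NormedAddCommGroup F] [NormedSpace ℝ F] {k : ℕ}
    (f : F → E) (ω : Coch E k) : Coch F k := fun x v =>
  ω (f x) fun a => fderiv ℝ f x (v a)

/-- The differential of a function, as a 1-cochain. -/
noncomputable def dFun {E : Type} [NormedAddCommGroup E] [NormedSpace ℝ E]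
    (H : E → ℝ) : Coch E 1 := fun q v => fderiv ℝ H q (v 0)

/-! ## The coordinate model of first-order Hamiltonian field theory

The base is `ℝ^m` with coordinates `xⁱ`, the configuration bundle is `E = ℝ^m × ℝ^N` with
fibre coordinates `u^α`, and the reduced multimomentum bundle is
`J¹π* = ℝ^m × ℝ^N × ℝ^{mN}` with coordinates `(xⁱ, u^α, pⁱ_α)`. -/

/-- `J¹π* = ℝ^m × ℝ^N × ℝ^{mN}` in coordinates `(xⁱ, u^α, pⁱ_α)`. -/
abbrev Jb (m N : ℕ) : Type := (Fin m → ℝ) × (Fin N → ℝ) × (Fin m → Fin N → ℝ)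

/-- The coordinate volume form `d_mx = dx¹∧⋯∧dx^m` on `J¹π*`. -/
def dmxJ (m N : ℕ) : Coch (Jb m N) m := fun _ v => Matrix.det (Matrix.of fun a b => (v b).1 a)

/-- The coordinate 1-form `du^α` on `J¹π*`. -/
def duJ (m N : ℕ) (α : Fin N) : Coch (Jb m N) 1 := fun _ v => (v 0).2.1 α

/-- The coordinate 1-form `dpⁱ_α` on `J¹π*`. -/
def dpJ (m N : ℕ) (i : Fin m) (α : Fin N) : Coch (Jb m N) 1 := fun _ v => (v 0).2.2 i α

/-- The coordinate vector `∂/∂xⁱ` on `J¹π*`. -/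
def XdirJ (m N : ℕ) (i : Fin m) : Jb m N := (Pi.single i 1, 0, 0)

/-- The coordinate vector `∂/∂u^α` on `J¹π*`. -/
def UdirJ (m N : ℕ) (α : Fin N) : Jb m N := (0, Pi.single α 1, 0)

/-- The coordinate vector `∂/∂pⁱ_α` on `J¹π*`. -/
def PdirJ (m N : ℕ) (i : Fin m) (α : Fin N) : Jb m N := (0, 0, Pi.single i (Pi.single α 1))

/-- The `m`-form `du^α ∧ (∂_i ⌟ d_mx) = -(∂_i ⌟ (du^α ∧ d_mx))` on `J¹π*`. -/
def duContr (m N : ℕ) (α : Fin N) (i : Fin m) : Coch (Jb m N) m := fun q v =>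
  -(iotaV (fun _ => XdirJ m N i) (wedge1 (duJ m N α) (dmxJ m N)) q v)

/-- The Hamiltonian `(m+1)`-form `Ω_h = dH∧d_mx − dpⁱ_α∧du^α∧(∂_i⌟d_mx)` on `J¹π*`. -/
noncomputable def OmegaH (m N : ℕ) (H : Jb m N → ℝ) : Coch (Jb m N) (m + 1) := fun q v =>
  wedge1 (dFun H) (dmxJ m N) q v -
    ∑ i : Fin m, ∑ α : Fin N, wedge1 (dpJ m N i α) (duContr m N α i) q v

/-- The `m`-form `Θ_h = −H d_mx + pⁱ_α du^α∧(∂_i⌟d_mx)` on `J¹π*`. -/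
noncomputable def ThetaHc (m N : ℕ) (H : Jb m N → ℝ) : Coch (Jb m N) m := fun q v =>
  -(H q) * dmxJ m N q v + ∑ i : Fin m, ∑ α : Fin N, q.2.2 i α * duContr m N α i q v

/-- The pullback to `J¹π*` of the 1-form `ϑ = ϑ_i(x) dxⁱ` on the base. -/
def thJ (m N : ℕ) (ϑ : (Fin m → ℝ) → Fin m → ℝ) : Coch (Jb m N) 1 := fun q v =>
  ∑ i : Fin m, ϑ q.1 i * (v 0).1 i

/-- The locally conformal Hamiltonian `(m+1)`-form `(Ω_θ)_h = Ω_h + θ∧Θ_h` on `J¹π*`. -/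
noncomputable def OmegaThH (m N : ℕ) (H : Jb m N → ℝ) (ϑ : (Fin m → ℝ) → Fin m → ℝ) :
    Coch (Jb m N) (m + 1) := fun q v =>
  OmegaH m N H q v + wedge1 (thJ m N ϑ) (ThetaHc m N H) q v

/-- The section `φ(x) = (x, φ^α(x), φⁱ_α(x))` of `J¹π* → ℝ^m`. -/
def secJ (m N : ℕ) (φ : (Fin m → ℝ) → Fin N → ℝ) (P : (Fin m → ℝ) → Fin m → Fin N → ℝ) :
    (Fin m → ℝ) → Jb m N := fun x => (x, φ x, P x)

/-- Closedness of the 1-form `ϑ_i(x) dxⁱ` on `ℝ^m`, in coordinates. -/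
def ClosedOneForm (m : ℕ) (ϑ : (Fin m → ℝ) → Fin m → ℝ) : Prop :=
  ∀ (x : Fin m → ℝ) (i j : Fin m),
    fderiv ℝ (fun y => ϑ y i) x (Pi.single j 1) = fderiv ℝ (fun y => ϑ y j) x (Pi.single i 1)

/-- The Hamilton–De Donder–Weyl equations in coordinates:
`∂φ^α/∂xⁱ = ∂H/∂pⁱ_α ∘ φ` and `∑ᵢ ∂φⁱ_α/∂xⁱ = −∂H/∂u^α ∘ φ`. -/
def HDWeq (m N : ℕ) (H : Jb m N → ℝ) (φ : (Fin m → ℝ) → Fin N → ℝ)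
    (P : (Fin m → ℝ) → Fin m → Fin N → ℝ) : Prop :=
  (∀ (x : Fin m → ℝ) (i : Fin m) (α : Fin N),
      fderiv ℝ φ x (Pi.single i 1) α = fderiv ℝ H (secJ m N φ P x) (PdirJ m N i α)) ∧
  (∀ (x : Fin m → ℝ) (α : Fin N),
      (∑ i : Fin m, fderiv ℝ P x (Pi.single i 1) i α) =
        -(fderiv ℝ H (secJ m N φ P x) (UdirJ m N α)))

/-- The locally conformal Hamilton–De Donder–Weyl equations in coordinates:
`∂φ^α/∂xⁱ = ∂H/∂pⁱ_α ∘ φ` and `∑ᵢ ∂φⁱ_α/∂xⁱ = −∂H/∂u^α ∘ φ + ϑ_i φⁱ_α`. -/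
def lcHDWeq (m N : ℕ) (H : Jb m N → ℝ) (ϑ : (Fin m → ℝ) → Fin m → ℝ)
    (φ : (Fin m → ℝ) → Fin N → ℝ) (P : (Fin m → ℝ) → Fin m → Fin N → ℝ) : Prop :=
  (∀ (x : Fin m → ℝ) (i : Fin m) (α : Fin N),
      fderiv ℝ φ x (Pi.single i 1) α = fderiv ℝ H (secJ m N φ P x) (PdirJ m N i α)) ∧
  (∀ (x : Fin m → ℝ) (α : Fin N),
      (∑ i : Fin m, fderiv ℝ P x (Pi.single i 1) i α) =
        -(fderiv ℝ H (secJ m N φ P x) (UdirJ m N α)) + ∑ i : Fin m, ϑ x i * P x i α)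

namespace LCHelp

variable {m N : ℕ}

lemma dmx_zero (q : Jb m N) (W : Fin m → Jb m N) (b : Fin m) (hb : (W b).1 = 0) :
    dmxJ m N q W = 0 := by
  unfold dmxJ
  apply Matrix.det_eq_zero_of_column_eq_zero b
  intro a
  simp [hb]

lemma wedge_du_zero (α : Fin N) (q : Jb m N) (W : Fin (m + 1) → Jb m N) (b : Fin (m + 1))
    (h1 : (W b).1 = 0) (h2 : (W b).2.1 = 0) :
    wedge1 (duJ m N α) (dmxJ m N) q W = 0 := by
  unfold wedge1
  apply Finset.sum_eq_zero
  intro k _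
  by_cases hk : b = k
  · subst hk
    simp [duJ, h2]
  · obtain ⟨c, hc⟩ := Fin.exists_succAbove_eq hk
    have hz : dmxJ m N q (W ∘ k.succAbove) = 0 :=
      dmx_zero q _ c (by simpa [hc] using h1)
    rw [hz, mul_zero]

lemma duContr_zero (α : Fin N) (i : Fin m) (q : Jb m N) (W : Fin m → Jb m N) (b : Fin m)
    (h1 : (W b).1 = 0) (h2 : (W b).2.1 = 0) :
    duContr m N α i q W = 0 := by
  unfold duContr iotaV
  rw [wedge_du_zero α q _ b.succ (by simpa using h1) (by simpa using h2), neg_zero]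

lemma theta_zero (H : Jb m N → ℝ) (q : Jb m N) (W : Fin m → Jb m N) (b : Fin m)
    (h1 : (W b).1 = 0) (h2 : (W b).2.1 = 0) :
    ThetaHc m N H q W = 0 := by
  unfold ThetaHc
  rw [dmx_zero q W b h1]
  have : ∀ i : Fin m, ∀ α : Fin N, duContr m N α i q W = 0 := fun i α =>
    duContr_zero α i q W b h1 h2
  simp [this]

/-- The key determinant identity. -/
lemma det_claim (m : ℕ) (i : Fin (m + 1)) (v : Fin (m + 1) → Fin (m + 1) → ℝ)
    (L : Fin (m + 1) → ℝ) :
    ∑ j : Fin (m + 1), (-1 : ℝ) ^ ((j : ℕ) + 1) * (∑ k, L k * v j k) *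
      Matrix.det (Matrix.of fun (a : Fin (m + 1)) b =>
        (Fin.cons (Pi.single i 1) (v ∘ j.succAbove) : Fin (m + 1) → Fin (m + 1) → ℝ) b a)
    = -(L i * Matrix.det (Matrix.of fun a b => v b a)) := by
  classical
  set r0 : Fin (m + 2) → ℝ := Fin.cons 0 (fun j => ∑ k, L k * v j k) with hr0
  set rs : Fin (m + 1) → Fin (m + 2) → ℝ :=
    fun a' => Fin.cons ((Pi.single i 1 : Fin (m + 1) → ℝ) a') (fun j => v j a') with hrs
  set B : Matrix (Fin (m + 2)) (Fin (m + 2)) ℝ := Matrix.of (Fin.cons r0 rs) with hB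
  have hB0 : B 0 = r0 := rfl
  have hBs : ∀ a' : Fin (m + 1), B a'.succ = rs a' := fun a' => by
    funext c
    show (Fin.cons r0 rs : Fin (m + 2) → Fin (m + 2) → ℝ) a'.succ c = rs a' c
    rw [Fin.cons_succ]
  -- Step 1: LHS = det B
  have hexp : Matrix.det B =
      ∑ j : Fin (m + 1), (-1 : ℝ) ^ ((j : ℕ) + 1) * (∑ k, L k * v j k) *
        Matrix.det (Matrix.of fun (a : Fin (m + 1)) b =>
          (Fin.cons (Pi.single i 1) (v ∘ j.succAbove) : Fin (m + 1) → Fin (m + 1) → ℝ) b a) := by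
    rw [Matrix.det_succ_row_zero, Fin.sum_univ_succ]
    have h00 : B 0 0 = 0 := rfl
    rw [h00]
    simp only [mul_zero, zero_mul, zero_add, pow_zero, one_mul]
    refine Finset.sum_congr rfl fun j _ => ?_
    have hs : B 0 j.succ = ∑ k, L k * v j k := rfl
    rw [hs, Fin.val_succ]
    have hM : B.submatrix Fin.succ (j.succ).succAbove
        = Matrix.of fun (a : Fin (m + 1)) b =>
          (Fin.cons (Pi.single i 1) (v ∘ j.succAbove) : Fin (m + 1) → Fin (m + 1) → ℝ) b a := by
      ext a' c
      simp only [Matrix.submatrix_apply, Matrix.of_apply]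
      refine Fin.cases ?_ (fun c' => ?_) c
      · rw [Fin.succ_succAbove_zero]
        rw [hBs]
        simp [hrs]
      · rw [Fin.succ_succAbove_succ]
        rw [hBs]
        simp [hrs]
    rw [hM]
  -- Step 2: det B = -(L i * det v)
  have hrow : r0 = (∑ k : Fin (m + 1), L k • B k.succ) + (-(L i)) • (Pi.single (0 : Fin (m + 2)) 1 : Fin (m + 2) → ℝ) := by
    funext b
    refine Fin.cases ?_ (fun j => ?_) b
    · simp only [hr0, Fin.cons_zero, Pi.add_apply, Finset.sum_apply, Pi.smul_apply,
        smul_eq_mul, Pi.single_eq_same]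
      have hk0 : ∀ k : Fin (m + 1), B k.succ 0 = (Pi.single i 1 : Fin (m + 1) → ℝ) k :=
        fun k => by rw [hBs]; exact Fin.cons_zero _ _
      simp only [hk0]
      have hsum : ∑ k : Fin (m + 1), L k * (Pi.single i 1 : Fin (m + 1) → ℝ) k = L i := by
        rw [Finset.sum_eq_single i]
        · simp
        · intro b _ hb; simp [Pi.single_eq_of_ne hb]
        · simp
      rw [hsum]; ring
    · simp only [hr0, Fin.cons_succ, Pi.add_apply, Finset.sum_apply, Pi.smul_apply,
        smul_eq_mul]
      have h1 : ∀ k : Fin (m + 1), B k.succ j.succ = v j k := fun k => by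
        rw [hBs]; simp [hrs, Fin.cons_succ]
      have h2 : (Pi.single (0 : Fin (m + 2)) 1 : Fin (m + 2) → ℝ) j.succ = 0 :=
        Pi.single_eq_of_ne (Fin.succ_ne_zero j) 1
      simp [h1, h2]
  have hdetB : Matrix.det B = -(L i * Matrix.det (Matrix.of fun a b => v b a)) := by
    have h1 : B = B.updateRow 0 r0 := by rw [← hB0, Matrix.updateRow_eq_self]
    rw [h1, hrow, Matrix.det_updateRow_add]
    have hsum0 : (B.updateRow 0 (∑ k : Fin (m + 1), L k • B k.succ)).det = 0 := by
      have he : (∑ k : Fin (m + 1), L k • B k.succ)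
          = ∑ a : Fin (m + 2), (Fin.cons 0 L : Fin (m + 2) → ℝ) a • B a := by
        symm
        rw [Fin.sum_univ_succ]
        simp [Fin.cons_succ]
      rw [he, Matrix.det_updateRow_sum]
      simp
    rw [hsum0, zero_add, Matrix.det_updateRow_smul]
    have hsingle : (B.updateRow 0 ((Pi.single (0 : Fin (m + 2)) 1 : Fin (m + 2) → ℝ))).det
        = Matrix.det (Matrix.of fun a b => v b a) := by
      rw [Matrix.det_succ_row_zero, Fin.sum_univ_succ]
      have e0 : (B.updateRow 0 ((Pi.single (0 : Fin (m + 2)) 1 : Fin (m + 2) → ℝ))) 0 0 = 1 := by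
        simp [Matrix.updateRow_self]
      have es : ∀ j : Fin (m + 1), (B.updateRow 0 ((Pi.single (0 : Fin (m + 2)) 1 : Fin (m + 2) → ℝ))) 0 j.succ = 0 := by
        intro j
        simp [Matrix.updateRow_self, Pi.single_eq_of_ne (Fin.succ_ne_zero j)]
      rw [e0]
      have hM : (B.updateRow 0 ((Pi.single (0 : Fin (m + 2)) 1 : Fin (m + 2) → ℝ))).submatrix
            Fin.succ (0 : Fin (m + 2)).succAbove
          = Matrix.of fun a b => v b a := by
        ext a' c
        simp only [Matrix.submatrix_apply, Matrix.of_apply]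
        rw [show ((0 : Fin (m + 2)).succAbove c) = c.succ from Fin.zero_succAbove c]
        rw [Matrix.updateRow_ne (Fin.succ_ne_zero a')]
        rw [hBs]
        simp [hrs]
      rw [hM]
      simp only [es, mul_zero, zero_mul, Finset.sum_const_zero, add_zero, Fin.val_zero,
        pow_zero, one_mul, mul_one]
    rw [hsingle]
    ring
  rw [← hexp, hdetB]

/-- Evaluation of `duContr` on vectors whose `u`-components depend linearly on `x`-components. -/
lemma duContr_eval (α : Fin N) (i : Fin m) (q : Jb m N) (W : Fin m → Jb m N)
    (v : Fin m → Fin m → ℝ) (L : Fin m → ℝ)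
    (h1 : ∀ a, (W a).1 = v a)
    (h2 : ∀ a, (W a).2.1 α = ∑ k, L k * v a k) :
    duContr m N α i q W = L i * Matrix.det (Matrix.of fun a b => v b a) := by
  obtain ⟨m', rfl⟩ : ∃ m'', m = m'' + 1 :=
    ⟨m - 1, (Nat.succ_pred_eq_of_pos i.pos).symm⟩
  unfold duContr iotaV wedge1
  rw [Fin.sum_univ_succ]
  have hz : duJ (m' + 1) N α q
      (fun _ => (Fin.cons (XdirJ (m' + 1) N i) W : Fin (m' + 2) → Jb (m' + 1) N) 0) = 0 := by
    simp [duJ, XdirJ]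
  rw [hz]
  simp only [mul_zero, zero_mul, zero_add, pow_zero]
  have hterm : ∀ j : Fin (m' + 1),
      (-1 : ℝ) ^ (((j.succ : Fin (m' + 2)) : ℕ)) *
        duJ (m' + 1) N α q
          (fun _ => (Fin.cons (XdirJ (m' + 1) N i) W : Fin (m' + 2) → Jb (m' + 1) N) j.succ) *
        dmxJ (m' + 1) N q
          ((Fin.cons (XdirJ (m' + 1) N i) W : Fin (m' + 2) → Jb (m' + 1) N) ∘ (j.succ).succAbove)
      = (-1 : ℝ) ^ ((j : ℕ) + 1) * (∑ k, L k * v j k) *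
        Matrix.det (Matrix.of fun (a : Fin (m' + 1)) b =>
          (Fin.cons (Pi.single i 1) (v ∘ j.succAbove) : Fin (m' + 1) → Fin (m' + 1) → ℝ) b a) := by
    intro j
    rw [Fin.val_succ]
    have hdu : duJ (m' + 1) N α q
        (fun _ => (Fin.cons (XdirJ (m' + 1) N i) W : Fin (m' + 2) → Jb (m' + 1) N) j.succ)
        = ∑ k, L k * v j k := by
      simp only [duJ, Fin.cons_succ]
      exact h2 j
    have hM : (Matrix.of fun (a : Fin (m' + 1)) c =>
          ((((Fin.cons (XdirJ (m' + 1) N i) W : Fin (m' + 2) → Jb (m' + 1) N)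
            ∘ (j.succ).succAbove)) c).1 a)
        = Matrix.of fun (a : Fin (m' + 1)) b =>
          (Fin.cons (Pi.single i 1) (v ∘ j.succAbove) : Fin (m' + 1) → Fin (m' + 1) → ℝ) b a := by
      ext a c
      simp only [Matrix.of_apply, Function.comp_apply]
      refine Fin.cases ?_ (fun c' => ?_) c
      · rw [Fin.succ_succAbove_zero]
        simp [XdirJ]
      · rw [Fin.succ_succAbove_succ]
        simp [Fin.cons_succ, h1]
    rw [hdu]
    unfold dmxJ
    rw [hM]
  rw [Finset.sum_congr rfl (fun j _ => hterm j), det_claim m' i v L]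
  ring

end LCHelp


/-- Conformal version of Lemma 2 of the paper, in coordinates.  With a closed 1-form
`θ = ϑ_i(x)dxⁱ` and `(Ω_θ)_h = Ω_h + θ∧Θ_h`: if `σ` is an integral section of the
connection induced by the section `η` of `J¹π* → E` (`∂σ^α/∂xⁱ = (∂H/∂pⁱ_α)∘ψ`, where
`ψ(x) = (x, σ(x), η(x,σ(x)))`), then `ψ*(ι_Z (Ω_θ)_h) = 0` for every smooth
`ν`-vertical vector field `Z = Zⁱ_α ∂/∂pⁱ_α` on `J¹π*`. -/
theorem pullback_vertical_contraction_conformal_vanishes (m N : ℕ)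
    (H : Jb m N → ℝ) (hH : ContDiff ℝ (⊤ : ℕ∞) H)
    (ϑ : (Fin m → ℝ) → Fin m → ℝ) (hϑ : ContDiff ℝ (⊤ : ℕ∞) ϑ)
    (hϑclosed : ClosedOneForm m ϑ)
    (η : (Fin m → ℝ) × (Fin N → ℝ) → Fin m → Fin N → ℝ) (hη : ContDiff ℝ (⊤ : ℕ∞) η)
    (σ : (Fin m → ℝ) → Fin N → ℝ) (hσ : ContDiff ℝ (⊤ : ℕ∞) σ)
    (ψ : (Fin m → ℝ) → Jb m N)
    (hψ : ∀ x : Fin m → ℝ, ψ x = (x, σ x, η (x, σ x)))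
    -- `σ` is an integral section: `∂σ^α/∂xⁱ = (∂H/∂pⁱ_α)(x, σ(x), η(x,σ(x)))`
    (hint : ∀ (x : Fin m → ℝ) (i : Fin m) (α : Fin N),
      fderiv ℝ σ x (Pi.single i 1) α = fderiv ℝ H (ψ x) (PdirJ m N i α)) :
    ∀ Z : Jb m N → Fin m → Fin N → ℝ, ContDiff ℝ (⊤ : ℕ∞) Z →
      ∀ (x : Fin m → ℝ) (v : Fin m → Fin m → ℝ),
        pullC ψ (iotaV (fun q => (0, 0, Z q)) (OmegaThH m N H ϑ)) x v = 0 := by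
  intro Z hZ x v
  unfold pullC iotaV
  -- the derivative of ψ
  have hψfun : ψ = fun y => (y, σ y, η (y, σ y)) := funext hψ
  have hσd : DifferentiableAt ℝ σ x := (hσ.differentiable (by simp)) x
  have hγd : DifferentiableAt ℝ (fun y => η (y, σ y)) x :=
    ((hη.comp (contDiff_id.prodMk hσ)).differentiable (by simp)) x
  have hDψ : fderiv ℝ ψ x = (ContinuousLinearMap.id ℝ (Fin m → ℝ)).prod
      ((fderiv ℝ σ x).prod (fderiv ℝ (fun y => η (y, σ y)) x)) := by
    rw [hψfun]
    exact ((hasFDerivAt_id x).prodMk (hσd.hasFDerivAt.prodMk hγd.hasFDerivAt)).fderiv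
  have hw1 : ∀ a : Fin m, (fderiv ℝ ψ x (v a)).1 = v a := by
    intro a; rw [hDψ]; rfl
  have hw2 : ∀ a : Fin m, (fderiv ℝ ψ x (v a)).2.1 = fderiv ℝ σ x (v a) := by
    intro a; rw [hDψ]; rfl
  set q : Jb m N := ψ x with hq
  -- linearity of the derivative of σ
  have hlin : ∀ (y : Fin m → ℝ) (α : Fin N),
      fderiv ℝ σ x y α = ∑ k, fderiv ℝ σ x (Pi.single k 1) α * y k := by
    intro y α
    have hy : y = ∑ k : Fin m, y k • (Pi.single k 1 : Fin m → ℝ) := by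
      funext a
      rw [Finset.sum_apply]
      simp [Pi.single_apply]
    conv_lhs => rw [hy]
    rw [map_sum, Finset.sum_apply]
    refine Finset.sum_congr rfl fun k _ => ?_
    rw [map_smul]
    simp [mul_comm]
  -- main computation for an abstract list of vectors
  have key : ∀ V : Fin (m + 1) → Jb m N,
      V 0 = ((0, 0, Z q) : Jb m N) →
      (∀ a : Fin m, V a.succ = fderiv ℝ ψ x (v a)) →
      OmegaThH m N H ϑ q V = 0 := by
    intro V hV0 hVs
    have hV0x : (V 0).1 = 0 := by rw [hV0]
    have hV0u : (V 0).2.1 = 0 := by rw [hV0]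
    set D : ℝ := Matrix.det (Matrix.of fun a b => v b a) with hD
    -- Piece 1
    have hpiece1 : wedge1 (dFun H) (dmxJ m N) q V
        = fderiv ℝ H q ((0, 0, Z q) : Jb m N) * D := by
      unfold wedge1
      rw [Fin.sum_univ_succ]
      have hrest : ∀ j : Fin m, (-1 : ℝ) ^ (((j.succ : Fin (m + 1))) : ℕ) *
          dFun H q (fun _ => V j.succ) * dmxJ m N q (V ∘ (j.succ).succAbove) = 0 := by
        intro j
        obtain ⟨b, hb⟩ := Fin.exists_succAbove_eq (Fin.succ_ne_zero j).symm
        rw [LCHelp.dmx_zero q _ b (by simp [hb, hV0x]), mul_zero]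
      rw [Finset.sum_eq_zero fun j _ => hrest j, add_zero]
      have h1 : dFun H q (fun _ => V 0) = fderiv ℝ H q ((0, 0, Z q) : Jb m N) := by
        unfold dFun
        rw [hV0]
      have h2 : dmxJ m N q (V ∘ (0 : Fin (m + 1)).succAbove) = D := by
        unfold dmxJ
        rw [hD]
        congr 1
        ext a b
        simp only [Matrix.of_apply, Function.comp_apply, Fin.zero_succAbove]
        rw [hVs b, hw1 b]
      rw [h1, h2]
      simp
    -- Piece 2
    have hpiece2 : ∀ (i : Fin m) (α : Fin N),
        wedge1 (dpJ m N i α) (duContr m N α i) q V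
          = Z q i α * (fderiv ℝ σ x (Pi.single i 1) α * D) := by
      intro i α
      unfold wedge1
      rw [Fin.sum_univ_succ]
      have hrest : ∀ j : Fin m, (-1 : ℝ) ^ (((j.succ : Fin (m + 1))) : ℕ) *
          dpJ m N i α q (fun _ => V j.succ) * duContr m N α i q (V ∘ (j.succ).succAbove) = 0 := by
        intro j
        obtain ⟨b, hb⟩ := Fin.exists_succAbove_eq (Fin.succ_ne_zero j).symm
        rw [LCHelp.duContr_zero α i q _ b (by simp [hb, hV0x]) (by simp [hb, hV0u]), mul_zero]
      rw [Finset.sum_eq_zero fun j _ => hrest j, add_zero]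
      have h1 : dpJ m N i α q (fun _ => V 0) = Z q i α := by
        unfold dpJ
        rw [hV0]
      have h2 : duContr m N α i q (V ∘ (0 : Fin (m + 1)).succAbove)
          = fderiv ℝ σ x (Pi.single i 1) α * D := by
        rw [hD]
        refine LCHelp.duContr_eval α i q _ v (fun k => fderiv ℝ σ x (Pi.single k 1) α) ?_ ?_
        · intro a
          simp only [Function.comp_apply, Fin.zero_succAbove]
          rw [hVs a, hw1 a]
        · intro a
          simp only [Function.comp_apply, Fin.zero_succAbove]
          rw [hVs a, hw2 a]
          exact hlin (v a) α
      rw [h1, h2]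
      simp
    -- Piece 3
    have hpiece3 : wedge1 (thJ m N ϑ) (ThetaHc m N H) q V = 0 := by
      unfold wedge1
      apply Finset.sum_eq_zero
      intro k _
      refine Fin.cases ?_ (fun j => ?_) k
      · have hth : thJ m N ϑ q (fun _ => V 0) = 0 := by
          unfold thJ
          simp [hV0x]
        rw [hth, mul_zero, zero_mul]
      · obtain ⟨b, hb⟩ := Fin.exists_succAbove_eq (Fin.succ_ne_zero j).symm
        rw [LCHelp.theta_zero H q _ b (by simp [hb, hV0x]) (by simp [hb, hV0u]), mul_zero]
    -- derivative of H in the vertical direction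
    have hsum : ((0, 0, Z q) : Jb m N) = ∑ i : Fin m, ∑ α : Fin N, Z q i α • PdirJ m N i α := by
      have h3 : (Z q) = ∑ i : Fin m, ∑ α : Fin N,
          Z q i α • (Pi.single i (Pi.single α 1) : Fin m → Fin N → ℝ) := by
        funext i' α'
        rw [Finset.sum_apply, Finset.sum_apply]
        simp [apply_ite (fun f : Fin N → ℝ => f α'), Pi.single_apply]
      refine Prod.ext ?_ (Prod.ext ?_ ?_)
      · simp [PdirJ, Prod.fst_sum]
      · simp [PdirJ, Prod.fst_sum, Prod.snd_sum]
      · simp only [PdirJ, Prod.snd_sum]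
        exact h3
    have hDH : fderiv ℝ H q ((0, 0, Z q) : Jb m N)
        = ∑ i : Fin m, ∑ α : Fin N, Z q i α * fderiv ℝ H q (PdirJ m N i α) := by
      rw [hsum, map_sum]
      refine Finset.sum_congr rfl fun i _ => ?_
      rw [map_sum]
      refine Finset.sum_congr rfl fun α _ => ?_
      rw [map_smul]
      simp
    -- assemble
    unfold OmegaThH OmegaH
    rw [hpiece1, hpiece3, add_zero, hDH]
    rw [Finset.sum_congr rfl fun i _ => Finset.sum_congr rfl fun α _ => hpiece2 i α]
    rw [Finset.sum_mul, sub_eq_zero]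
    refine Finset.sum_congr rfl fun i _ => ?_
    rw [Finset.sum_mul]
    refine Finset.sum_congr rfl fun α _ => ?_
    rw [← hint x i α]
    ring
  exact key _ (by rw [Fin.cons_zero]) (fun a => by rw [Fin.cons_succ])
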